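/- Let (M, γ) be a weighted binary matroid with nonnegative weights, T = {p₁,p₂,p₃} a circuit of M, and define (at q = 2): z₀ = Z̃(M\p₁,p₂,p₃; γ), z₁ = Z̃(M/p₁\p₂,p₃; γ), z₂ = Z̃(M/p₂\p₁,p₃; γ), z₃ = Z̃(M/p₃\p₁,p₂; γ), z₄ = Z̃(M/p₁,p₂,p₃; γ). Then: (i) z₀ > 0; (ii) z₀ ≤ zᵢ ≤ 2z₀ for i = 1,2,3; (iii) z₄/2 < zᵢ ≤ z₄ for i = 1,2,3; and (iv) z₁ + z₂ + z₃ = 2z₀ + z₄. -/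

import Mathlib

open Finset

/-- Vectors in GF(2)^α vanishing outside A. -/
noncomputable def supportedOn {α : Type*} [Fintype α] [DecidableEq α] (A : Finset α) :
    Submodule (ZMod 2) (α → ZMod 2) :=
  Submodule.pi (↑(Aᶜ)) fun _ => ⊥

/-- Rank function of the binary matroid with cycle space 𝒞. -/
noncomputable def rk {α : Type*} [Fintype α] [DecidableEq α]
    (𝒞 : Submodule (ZMod 2) (α → ZMod 2)) (A : Finset α) : ℤ :=
  (A.card : ℤ) - Module.finrank (ZMod 2) ↥(𝒞 ⊓ supportedOn A)

/-- The GF(2) indicator vector of a finset. -/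
def ind {α : Type*} [DecidableEq α] (S : Finset α) : α → ZMod 2 :=
  fun i => if i ∈ S then 1 else 0


lemma mem_supportedOn {α : Type*} [Fintype α] [DecidableEq α] {A : Finset α}
    {x : α → ZMod 2} : x ∈ supportedOn A ↔ ∀ i ∉ A, x i = 0 := by
  simp [supportedOn, Submodule.mem_pi]

lemma supportedOn_mono {α : Type*} [Fintype α] [DecidableEq α] {A B : Finset α}
    (h : A ⊆ B) : supportedOn A ≤ supportedOn B := by
  intro x hx
  rw [mem_supportedOn] at *
  exact fun i hi => hx i (fun hiA => hi (h hiA))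

lemma finrank_restrict_eq {K M N : Type*} [Field K] [AddCommGroup M] [Module K M]
    [AddCommGroup N] [Module K N] [FiniteDimensional K M]
    (W : Submodule K M) (f : M →ₗ[K] N) :
    Module.finrank K W
      = Module.finrank K (W.map f) + Module.finrank K ↥(W ⊓ LinearMap.ker f) := by
  have h := LinearMap.finrank_range_add_finrank_ker (f.domRestrict W)
  rw [LinearMap.range_domRestrict, LinearMap.ker_domRestrict] at h
  rw [← h]
  congr 1
  have hle : W ⊓ LinearMap.ker f ≤ W := inf_le_left
  have e := Submodule.comapSubtypeEquivOfLe hle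
  have hc : Submodule.comap W.subtype (W ⊓ LinearMap.ker f)
      = Submodule.comap W.subtype (LinearMap.ker f) := by
    rw [Submodule.comap_inf]
    simp [Submodule.comap_subtype_self]
  rw [← hc]
  exact e.finrank_eq

lemma nat_card_submodule_eq {V₀ : Type*} [AddCommGroup V₀] [Module (ZMod 2) V₀] [Finite V₀]
    (V : Submodule (ZMod 2) V₀) : Nat.card V = 2 ^ Module.finrank (ZMod 2) V := by
  have : Fintype V := Fintype.ofFinite V
  rw [Nat.card_eq_fintype_card, Module.card_eq_pow_finrank (K := ZMod 2), ZMod.card]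

section core

def u3 : Fin 3 → ZMod 2 := fun _ => 1
def e3 (j : Fin 3) : Fin 3 → ZMod 2 := Pi.single j 1

lemma cover3 : ∀ x : Fin 3 → ZMod 2, x = 0 ∨ x = u3 ∨
    ∃ j : Fin 3, x = e3 j ∨ x = u3 + e3 j := by decide

lemma uadd3 : ∀ j : Fin 3, e3 j = u3 + (u3 + e3 j) := by decide

lemma vsplit3 : ∀ (j : Fin 3) (v : Fin 3 → ZMod 2), (∀ k, k ≠ j → v k = 0) →
    v = 0 ∨ v = e3 j := by decide

lemma finrank_of_card {V : Submodule (ZMod 2) (Fin 3 → ZMod 2)} {S : Finset (Fin 3 → ZMod 2)}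
    (h : (V : Set (Fin 3 → ZMod 2)) = ↑S) {n : ℕ} (hS : S.card = 2 ^ n) :
    Module.finrank (ZMod 2) V = n := by
  have h1 : Nat.card V = 2 ^ Module.finrank (ZMod 2) V := nat_card_submodule_eq V
  have h2 : Nat.card V = S.card := by
    calc Nat.card V = Nat.card (V : Set (Fin 3 → ZMod 2)) := rfl
    _ = Nat.card (↑S : Set (Fin 3 → ZMod 2)) := by rw [h]
    _ = S.card := by rw [Nat.card_coe_set_eq, Set.ncard_coe_finset]
  have h3 : (2:ℕ) ^ Module.finrank (ZMod 2) V = 2 ^ n := by rw [← h1, h2, hS]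
  exact Nat.pow_right_injective (le_refl 2) h3

lemma core_none (V : Submodule (ZMod 2) (Fin 3 → ZMod 2)) (hu : u3 ∈ V)
    (ho : ∀ j, e3 j ∉ V) :
    Module.finrank (ZMod 2) V = 1 := by
  refine finrank_of_card (S := {0, u3}) ?_ (by decide)
  ext x
  simp only [SetLike.mem_coe, Finset.coe_insert, Finset.coe_singleton, Set.mem_insert_iff,
    Set.mem_singleton_iff]
  constructor
  · intro hx
    rcases cover3 x with rfl | rfl | ⟨j, rfl | rfl⟩
    · exact Or.inl rfl
    · exact Or.inr rfl
    · exact absurd hx (ho j)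
    · exact absurd ((uadd3 j) ▸ V.add_mem hu hx) (ho j)
  · rintro (rfl | rfl)
    · exact V.zero_mem
    · exact hu

lemma core_one_card : ∀ i : Fin 3,
    ({0, u3, e3 i, u3 + e3 i} : Finset (Fin 3 → ZMod 2)).card = 2 ^ 2 := by decide

lemma core_one (V : Submodule (ZMod 2) (Fin 3 → ZMod 2)) (hu : u3 ∈ V)
    (i : Fin 3) (hi : e3 i ∈ V)
    (ho : ∀ j, j ≠ i → e3 j ∉ V) :
    Module.finrank (ZMod 2) V = 2 := by
  refine finrank_of_card (S := {0, u3, e3 i, u3 + e3 i}) ?_ (core_one_card i)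
  ext x
  simp only [SetLike.mem_coe, Finset.coe_insert, Finset.coe_singleton, Set.mem_insert_iff,
    Set.mem_singleton_iff]
  constructor
  · intro hx
    rcases cover3 x with rfl | rfl | ⟨j, rfl | rfl⟩
    · exact Or.inl rfl
    · exact Or.inr (Or.inl rfl)
    · rcases eq_or_ne j i with rfl | hji
      · exact Or.inr (Or.inr (Or.inl rfl))
      · exact absurd hx (ho j hji)
    · rcases eq_or_ne j i with rfl | hji
      · exact Or.inr (Or.inr (Or.inr rfl))
      · exact absurd ((uadd3 j) ▸ V.add_mem hu hx) (ho j hji)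
  · rintro (rfl | rfl | rfl | rfl)
    · exact V.zero_mem
    · exact hu
    · exact hi
    · exact V.add_mem hu hi

lemma core_all (V : Submodule (ZMod 2) (Fin 3 → ZMod 2)) (hu : u3 ∈ V)
    (ho : ∀ j, e3 j ∈ V) :
    Module.finrank (ZMod 2) V = 3 := by
  refine finrank_of_card (S := Finset.univ) ?_ (by decide)
  have hV : V = ⊤ := by
    rw [eq_top_iff]
    intro x _
    rcases cover3 x with rfl | rfl | ⟨j, rfl | rfl⟩
    · exact V.zero_mem
    · exact hu
    · exact ho j
    · exact V.add_mem hu (ho j)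
  rw [hV]
  simp

lemma third3 : ∀ i j k : Fin 3, i ≠ j → i ≠ k → j ≠ k →
    e3 k = u3 + e3 i + e3 j := by decide

lemma core (V : Submodule (ZMod 2) (Fin 3 → ZMod 2)) (hu : u3 ∈ V) :
    ∃ (s : ℕ) (m : Fin 3 → ℕ),
      Module.finrank (ZMod 2) V = s + 1 ∧
      (∀ j, m j ≤ 1) ∧ (∀ j, (e3 j ∈ V ↔ m j = 1)) ∧
      (∀ j, m j ≤ s) ∧ (∀ j, s ≤ m j + 1) ∧
      2 ^ m 0 + 2 ^ m 1 + 2 ^ m 2 = 2 + 2 ^ s := by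
  by_cases h0 : e3 0 ∈ V <;> by_cases h1 : e3 1 ∈ V <;> by_cases h2 : e3 2 ∈ V
  · exact ⟨2, fun _ => 1, core_all V hu (fun j => by fin_cases j <;> assumption),
      fun j => le_refl 1, fun j => by fin_cases j <;> simp [h0, h1, h2],
      fun j => by norm_num, fun j => by norm_num, by norm_num⟩
  · exact absurd ((third3 0 1 2 (by decide) (by decide) (by decide)).symm ▸
      V.add_mem (V.add_mem hu h0) h1) h2
  · exact absurd ((third3 0 2 1 (by decide) (by decide) (by decide)).symm ▸
      V.add_mem (V.add_mem hu h0) h2) h1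
  · refine ⟨1, ![1, 0, 0], core_one V hu 0 h0 (fun j hj => by fin_cases j <;> simp_all),
      fun j => by fin_cases j <;> decide, fun j => by fin_cases j <;> simp [h0, h1, h2],
      fun j => by fin_cases j <;> decide, fun j => by fin_cases j <;> decide, by decide⟩
  · exact absurd ((third3 1 2 0 (by decide) (by decide) (by decide)).symm ▸
      V.add_mem (V.add_mem hu h1) h2) h0
  · refine ⟨1, ![0, 1, 0], core_one V hu 1 h1 (fun j hj => by fin_cases j <;> simp_all),
      fun j => by fin_cases j <;> decide, fun j => by fin_cases j <;> simp [h0, h1, h2],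
      fun j => by fin_cases j <;> decide, fun j => by fin_cases j <;> decide, by decide⟩
  · refine ⟨1, ![0, 0, 1], core_one V hu 2 h2 (fun j hj => by fin_cases j <;> simp_all),
      fun j => by fin_cases j <;> decide, fun j => by fin_cases j <;> simp [h0, h1, h2],
      fun j => by fin_cases j <;> decide, fun j => by fin_cases j <;> decide, by decide⟩
  · exact ⟨0, fun _ => 0, core_none V hu (fun j => by fin_cases j <;> assumption),
      fun j => by norm_num, fun j => by fin_cases j <;> simp [h0, h1, h2],
      fun j => le_refl 0, fun j => by norm_num, by norm_num⟩

end core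

lemma perA {α : Type*} [Fintype α] [DecidableEq α]
    (p₁ p₂ p₃ : α) (h12 : p₁ ≠ p₂) (h13 : p₁ ≠ p₃) (h23 : p₂ ≠ p₃)
    (𝒞 : Submodule (ZMod 2) (α → ZMod 2))
    (hcirc : ind {p₁, p₂, p₃} ∈ 𝒞)
    (hmin : ∀ S : Finset α, S ⊆ {p₁, p₂, p₃} → S.Nonempty → S ≠ {p₁, p₂, p₃} → ind S ∉ 𝒞)
    (A : Finset α) (hA1 : p₁ ∉ A) (hA2 : p₂ ∉ A) (hA3 : p₃ ∉ A) :
    ∃ (d s m₁ m₂ m₃ : ℕ),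
      m₁ ≤ 1 ∧ m₂ ≤ 1 ∧ m₃ ≤ 1 ∧ m₁ ≤ s ∧ m₂ ≤ s ∧ m₃ ≤ s ∧
      s ≤ m₁ + 1 ∧ s ≤ m₂ + 1 ∧ s ≤ m₃ + 1 ∧
      2 ^ m₁ + 2 ^ m₂ + 2 ^ m₃ = 2 + 2 ^ s ∧
      rk 𝒞 A = (A.card : ℤ) - d ∧
      rk 𝒞 (insert p₁ A) = (A.card : ℤ) + 1 - (d + m₁) ∧
      rk 𝒞 (insert p₂ A) = (A.card : ℤ) + 1 - (d + m₂) ∧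
      rk 𝒞 (insert p₃ A) = (A.card : ℤ) + 1 - (d + m₃) ∧
      rk 𝒞 (A ∪ {p₁, p₂, p₃}) = (A.card : ℤ) + 3 - (d + s + 1) ∧
      (A = ∅ → s = 0) := by
  classical
  set g : Fin 3 → α := ![p₁, p₂, p₃] with hgdef
  have hg0 : g 0 = p₁ := rfl
  have hg1 : g 1 = p₂ := rfl
  have hg2 : g 2 = p₃ := rfl
  have hginj : ∀ j k : Fin 3, j ≠ k → g j ≠ g k := by
    intro j k hjk
    fin_cases j <;> fin_cases k <;>
      first
        | exact absurd rfl hjk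
        | exact h12 | exact h13 | exact h23
        | exact h12.symm | exact h13.symm | exact h23.symm
  have hgA : ∀ j, g j ∉ A := by
    intro j
    fin_cases j
    · exact hA1
    · exact hA2
    · exact hA3
  have hgT : ∀ j, g j ∈ ({p₁, p₂, p₃} : Finset α) := by
    intro j
    fin_cases j <;> simp only [Finset.mem_insert, Finset.mem_singleton]
    · exact Or.inl rfl
    · exact Or.inr (Or.inl rfl)
    · exact Or.inr (Or.inr rfl)
  have hTg : ∀ i ∈ ({p₁, p₂, p₃} : Finset α), ∃ j, i = g j := by
    intro i hi
    simp only [Finset.mem_insert, Finset.mem_singleton] at hi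
    rcases hi with rfl | rfl | rfl
    · exact ⟨0, rfl⟩
    · exact ⟨1, rfl⟩
    · exact ⟨2, rfl⟩
  set π : (α → ZMod 2) →ₗ[ZMod 2] (Fin 3 → ZMod 2) :=
    LinearMap.funLeft (ZMod 2) (ZMod 2) g with hπdef
  have hπapp : ∀ (x : α → ZMod 2) (j : Fin 3), π x j = x (g j) := fun _ _ => rfl
  have hmemker : ∀ x : α → ZMod 2, x ∈ LinearMap.ker π ↔ ∀ j, x (g j) = 0 := by
    intro x
    simp only [LinearMap.mem_ker]
    constructor
    · intro h j
      exact congrFun h j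
    · intro h
      funext j
      exact h j
  have hinf : ∀ B : Finset α, A ⊆ B → (∀ i ∈ B, i ∈ A ∨ ∃ j, i = g j) →
      (𝒞 ⊓ supportedOn B) ⊓ LinearMap.ker π = 𝒞 ⊓ supportedOn A := by
    intro B hAB hB
    ext x
    simp only [Submodule.mem_inf]
    constructor
    · rintro ⟨⟨hxC, hxB⟩, hxk⟩
      refine ⟨hxC, mem_supportedOn.mpr fun i hiA => ?_⟩
      by_cases hiB : i ∈ B
      · rcases hB i hiB with h | ⟨j, rfl⟩
        · exact absurd h hiA
        · exact (hmemker x).mp hxk j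
      · exact mem_supportedOn.mp hxB i hiB
    · rintro ⟨hxC, hxA⟩
      exact ⟨⟨hxC, supportedOn_mono hAB hxA⟩,
        (hmemker x).mpr fun j => mem_supportedOn.mp hxA (g j) (hgA j)⟩
  set d : ℕ := Module.finrank (ZMod 2) ↥(𝒞 ⊓ supportedOn A) with hddef
  have hrank : ∀ B : Finset α, A ⊆ B → (∀ i ∈ B, i ∈ A ∨ ∃ j, i = g j) →
      Module.finrank (ZMod 2) ↥(𝒞 ⊓ supportedOn B)
        = Module.finrank (ZMod 2) ((𝒞 ⊓ supportedOn B).map π) + d := by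
    intro B h1 h2
    rw [finrank_restrict_eq (𝒞 ⊓ supportedOn B) π, hinf B h1 h2]
  set V : Submodule (ZMod 2) (Fin 3 → ZMod 2) :=
    (𝒞 ⊓ supportedOn (A ∪ {p₁, p₂, p₃})).map π with hVdef
  have hu : u3 ∈ V := by
    refine Submodule.mem_map.mpr ⟨ind {p₁, p₂, p₃}, ⟨hcirc, mem_supportedOn.mpr ?_⟩, ?_⟩
    · intro i hi
      rw [Finset.mem_union, not_or] at hi
      simp [ind, hi.2]
    · funext j
      rw [hπapp]
      simp [ind, u3, hgT j]
  obtain ⟨s, m, hfr, hm1, hmiff, hms, hsm, hident⟩ := core V hu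
  have hsubins : ∀ j : Fin 3, insert (g j) A ⊆ A ∪ {p₁, p₂, p₃} := by
    intro j i hi
    rcases Finset.mem_insert.mp hi with rfl | hiA
    · exact Finset.mem_union_right _ (hgT j)
    · exact Finset.mem_union_left _ hiA
  have hVjle : ∀ j : Fin 3, (𝒞 ⊓ supportedOn (insert (g j) A)).map π ≤ V := by
    intro j
    exact Submodule.map_mono (inf_le_inf_left _ (supportedOn_mono (hsubins j)))
  have hVjsub : ∀ j : Fin 3, ∀ v ∈ (𝒞 ⊓ supportedOn (insert (g j) A)).map π,
      v = 0 ∨ v = e3 j := by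
    intro j v hv
    rcases Submodule.mem_map.mp hv with ⟨x, ⟨hxC, hxs⟩, rfl⟩
    refine vsplit3 j (π x) fun k hkj => ?_
    rw [hπapp]
    refine mem_supportedOn.mp hxs (g k) ?_
    rw [Finset.mem_insert, not_or]
    exact ⟨hginj k j hkj, hgA k⟩
  have hmemiff : ∀ j : Fin 3,
      e3 j ∈ V ↔ e3 j ∈ (𝒞 ⊓ supportedOn (insert (g j) A)).map π := by
    intro j
    constructor
    · intro hj
      rcases Submodule.mem_map.mp hj with ⟨x, ⟨hxC, hxs⟩, hπx⟩
      refine Submodule.mem_map.mpr ⟨x, ⟨hxC, mem_supportedOn.mpr fun i hi => ?_⟩, hπx⟩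
      rw [Finset.mem_insert, not_or] at hi
      by_cases hiT : i ∈ A ∪ ({p₁, p₂, p₃} : Finset α)
      · rcases Finset.mem_union.mp hiT with hiA | hiT'
        · exact absurd hiA hi.2
        · obtain ⟨k, rfl⟩ := hTg i hiT'
          have hkj : k ≠ j := fun h => hi.1 (h ▸ rfl)
          have := congrFun hπx k
          rw [hπapp] at this
          rw [this]
          exact Pi.single_eq_of_ne hkj 1
      · exact mem_supportedOn.mp hxs i hiT
    · intro hj
      exact hVjle j hj
  have hfrj : ∀ j : Fin 3,
      Module.finrank (ZMod 2) ((𝒞 ⊓ supportedOn (insert (g j) A)).map π) = m j := by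
    intro j
    by_cases hj : e3 j ∈ V
    · have h1 : m j = 1 := (hmiff j).mp hj
      rw [h1]
      refine finrank_of_card (S := {0, e3 j}) ?_ ?_
      · ext v
        simp only [SetLike.mem_coe, Finset.coe_insert, Finset.coe_singleton,
          Set.mem_insert_iff, Set.mem_singleton_iff]
        constructor
        · intro hv
          exact hVjsub j v hv
        · rintro (rfl | rfl)
          · exact Submodule.zero_mem _
          · exact (hmemiff j).mp hj
      · have : ∀ k : Fin 3, ({0, e3 k} : Finset (Fin 3 → ZMod 2)).card = 2 ^ 1 := by decide
        exact this j
    · have h1 : m j = 0 := by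
        have h2 := hm1 j
        have h3 : m j ≠ 1 := fun h => hj ((hmiff j).mpr h)
        omega
      rw [h1]
      refine finrank_of_card (S := {0}) ?_ (by simp)
      ext v
      simp only [SetLike.mem_coe, Finset.coe_singleton, Set.mem_singleton_iff]
      constructor
      · intro hv
        rcases hVjsub j v hv with rfl | rfl
        · rfl
        · exact absurd (hVjle j hv) hj
      · rintro rfl
        exact Submodule.zero_mem _
  have hinsmem : ∀ j : Fin 3, ∀ i ∈ insert (g j) A, i ∈ A ∨ ∃ k, i = g k := by
    intro j i hi
    rcases Finset.mem_insert.mp hi with rfl | hiA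
    · exact Or.inr ⟨j, rfl⟩
    · exact Or.inl hiA
  have hins : ∀ j : Fin 3, rk 𝒞 (insert (g j) A) = (A.card : ℤ) + 1 - (d + m j) := by
    intro j
    rw [rk, Finset.card_insert_of_notMem (hgA j),
      hrank (insert (g j) A) (Finset.subset_insert _ _) (hinsmem j), hfrj j]
    push_cast
    ring
  have hTcard : ({p₁, p₂, p₃} : Finset α).card = 3 := by
    rw [Finset.card_insert_of_notMem (by simp [h12, h13]),
      Finset.card_insert_of_notMem (by simp [h23]), Finset.card_singleton]
  have hdisj : Disjoint A ({p₁, p₂, p₃} : Finset α) := by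
    rw [Finset.disjoint_left]
    intro i hiA hiT
    obtain ⟨k, rfl⟩ := hTg i hiT
    exact hgA k hiA
  have hunionmem : ∀ i ∈ A ∪ ({p₁, p₂, p₃} : Finset α), i ∈ A ∨ ∃ k, i = g k := by
    intro i hi
    rcases Finset.mem_union.mp hi with hiA | hiT
    · exact Or.inl hiA
    · exact Or.inr (hTg i hiT)
  have hrk4 : rk 𝒞 (A ∪ {p₁, p₂, p₃}) = (A.card : ℤ) + 3 - (d + s + 1) := by
    rw [rk, Finset.card_union_of_disjoint hdisj, hTcard,
      hrank (A ∪ {p₁, p₂, p₃}) Finset.subset_union_left hunionmem, hfr]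
    push_cast
    ring
  have hs0 : A = ∅ → s = 0 := by
    intro hA0
    have hnj : ∀ j, e3 j ∉ V := by
      intro j hj
      rcases Submodule.mem_map.mp hj with ⟨x, ⟨hxC, hxs⟩, hπx⟩
      have hx : x = ind {g j} := by
        funext i
        by_cases hij : i = g j
        · subst hij
          have h := congrFun hπx j
          rw [hπapp] at h
          rw [h]
          simp [ind, e3, Pi.single_eq_same]
        · have h0 : ind {g j} i = 0 := by
            simp only [ind, Finset.mem_singleton]
            rw [if_neg hij]
          rw [h0]
          by_cases hiT : i ∈ A ∪ ({p₁, p₂, p₃} : Finset α)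
          · rcases Finset.mem_union.mp hiT with hiA | hiT'
            · rw [hA0] at hiA
              exact absurd hiA (Finset.notMem_empty i)
            · obtain ⟨k, rfl⟩ := hTg i hiT'
              have hkj : k ≠ j := fun h => hij (h ▸ rfl)
              have h := congrFun hπx k
              rw [hπapp] at h
              rw [h]
              exact Pi.single_eq_of_ne hkj 1
          · exact mem_supportedOn.mp hxs i hiT
      refine hmin {g j} ?_ ⟨g j, Finset.mem_singleton_self _⟩ ?_ (hx ▸ hxC)
      · rw [Finset.singleton_subset_iff]
        exact hgT j
      · intro heq
        have hp1 : p₁ ∈ ({g j} : Finset α) := heq ▸ (by simp)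
        have hp2 : p₂ ∈ ({g j} : Finset α) := heq ▸ (by simp)
        rw [Finset.mem_singleton] at hp1 hp2
        exact h12 (hp1.trans hp2.symm)
    have hm0 : ∀ j, m j = 0 := by
      intro j
      have h1 := hm1 j
      have h2 : m j ≠ 1 := fun h => (hnj j) ((hmiff j).mpr h)
      omega
    rw [hm0 0, hm0 1, hm0 2] at hident
    have h4 : (2:ℕ) ^ s = 2 ^ 0 := by omega
    exact Nat.pow_right_injective (le_refl 2) h4
  exact ⟨d, s, m 0, m 1, m 2, hm1 0, hm1 1, hm1 2, hms 0, hms 1, hms 2,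
    hsm 0, hsm 1, hsm 2, hident, rfl, hins 0, hins 1, hins 2, hrk4, hs0⟩

set_option maxHeartbeats 2000000 in
/-- For a weighted binary matroid (M,γ) with nonnegative weights and circuit
T = {p₁,p₂,p₃}, the five minor Tutte specializations at q = 2,
z₀ = Z̃(M\p₁,p₂,p₃;γ), zⱼ = Z̃(M/pⱼ\rest;γ) (j = 1,2,3), z₄ = Z̃(M/p₁,p₂,p₃;γ),
satisfy: (i) z₀ > 0; (ii) z₀ ≤ zᵢ ≤ 2z₀ (i = 1,2,3); (iii) z₄/2 < zᵢ ≤ z₄ (i = 1,2,3);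
(iv) z₁ + z₂ + z₃ = 2z₀ + z₄.
(Here r_{M/pⱼ}(A) = r(A ∪ {pⱼ}) − 1 and r_{M/T}(A) = r(A ∪ T) − 2, since T is a
circuit.) -/
theorem stmt_7 {α : Type*} [Fintype α] [DecidableEq α]
    (E : Finset α) (p₁ p₂ p₃ : α)
    (hne : p₁ ≠ p₂ ∧ p₁ ≠ p₃ ∧ p₂ ≠ p₃)
    (hpE : p₁ ∉ E ∧ p₂ ∉ E ∧ p₃ ∉ E)
    (𝒞 : Submodule (ZMod 2) (α → ZMod 2))
    (hsupp : ∀ x ∈ 𝒞, ∀ i, i ∉ E ∪ {p₁, p₂, p₃} → x i = 0)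
    (hcirc : ind {p₁, p₂, p₃} ∈ 𝒞)
    (hmin : ∀ S : Finset α, S ⊆ {p₁, p₂, p₃} → S.Nonempty → S ≠ {p₁, p₂, p₃} →
      ind S ∉ 𝒞)
    (γ : α → ℝ) (hγ : ∀ e, 0 ≤ γ e)
    (z₀ z₁ z₂ z₃ z₄ : ℝ)
    (hz₀ : z₀ = ∑ A ∈ E.powerset, (∏ e ∈ A, γ e) * (2 : ℝ) ^ (-rk 𝒞 A))
    (hz₁ : z₁ = ∑ A ∈ E.powerset,
      (∏ e ∈ A, γ e) * (2 : ℝ) ^ (-(rk 𝒞 (insert p₁ A) - 1)))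
    (hz₂ : z₂ = ∑ A ∈ E.powerset,
      (∏ e ∈ A, γ e) * (2 : ℝ) ^ (-(rk 𝒞 (insert p₂ A) - 1)))
    (hz₃ : z₃ = ∑ A ∈ E.powerset,
      (∏ e ∈ A, γ e) * (2 : ℝ) ^ (-(rk 𝒞 (insert p₃ A) - 1)))
    (hz₄ : z₄ = ∑ A ∈ E.powerset,
      (∏ e ∈ A, γ e) * (2 : ℝ) ^ (-(rk 𝒞 (A ∪ {p₁, p₂, p₃}) - 2))) :
    0 < z₀ ∧
      (z₀ ≤ z₁ ∧ z₁ ≤ 2 * z₀) ∧ (z₀ ≤ z₂ ∧ z₂ ≤ 2 * z₀) ∧ (z₀ ≤ z₃ ∧ z₃ ≤ 2 * z₀) ∧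
      (z₄ / 2 < z₁ ∧ z₁ ≤ z₄) ∧ (z₄ / 2 < z₂ ∧ z₂ ≤ z₄) ∧ (z₄ / 2 < z₃ ∧ z₃ ≤ z₄) ∧
      z₁ + z₂ + z₃ = 2 * z₀ + z₄ := by
  classical
  obtain ⟨h12, h13, h23⟩ := hne
  obtain ⟨hE1, hE2, hE3⟩ := hpE
  have h2ne : (2:ℝ) ≠ 0 := by norm_num
  have main : ∀ A ∈ E.powerset, ∃ (b : ℝ) (s m₁ m₂ m₃ : ℕ),
      0 ≤ b ∧ m₁ ≤ 1 ∧ m₂ ≤ 1 ∧ m₃ ≤ 1 ∧ m₁ ≤ s ∧ m₂ ≤ s ∧ m₃ ≤ s ∧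
      s ≤ m₁ + 1 ∧ s ≤ m₂ + 1 ∧ s ≤ m₃ + 1 ∧
      (2:ℝ) ^ m₁ + 2 ^ m₂ + 2 ^ m₃ = 2 + 2 ^ s ∧
      (∏ e ∈ A, γ e) * (2:ℝ) ^ (-rk 𝒞 A) = b ∧
      (∏ e ∈ A, γ e) * (2:ℝ) ^ (-(rk 𝒞 (insert p₁ A) - 1)) = b * 2 ^ m₁ ∧
      (∏ e ∈ A, γ e) * (2:ℝ) ^ (-(rk 𝒞 (insert p₂ A) - 1)) = b * 2 ^ m₂ ∧
      (∏ e ∈ A, γ e) * (2:ℝ) ^ (-(rk 𝒞 (insert p₃ A) - 1)) = b * 2 ^ m₃ ∧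
      (∏ e ∈ A, γ e) * (2:ℝ) ^ (-(rk 𝒞 (A ∪ {p₁, p₂, p₃}) - 2)) = b * 2 ^ s ∧
      (A = ∅ → 0 < b ∧ s = 0) := by
    intro A hA
    have hAE := Finset.mem_powerset.mp hA
    obtain ⟨d, s, m₁, m₂, m₃, a1, a2, a3, b1, b2, b3, c1, c2, c3, hid, r0, r1, r2, r3, r4, hs0⟩ :=
      perA p₁ p₂ p₃ h12 h13 h23 𝒞 hcirc hmin A (fun h => hE1 (hAE h)) (fun h => hE2 (hAE h))
        (fun h => hE3 (hAE h))
    refine ⟨(∏ e ∈ A, γ e) * (2:ℝ) ^ ((d : ℤ) - A.card), s, m₁, m₂, m₃,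
      mul_nonneg (Finset.prod_nonneg fun i _ => hγ i) (le_of_lt (zpow_pos (by norm_num) _)),
      a1, a2, a3, b1, b2, b3, c1, c2, c3, by exact_mod_cast hid, ?_, ?_, ?_, ?_, ?_, ?_⟩
    · rw [r0, show -((A.card : ℤ) - d) = (d : ℤ) - A.card by ring]
    · rw [r1, show -((A.card : ℤ) + 1 - (d + m₁) - 1) = ((d : ℤ) - A.card) + (m₁ : ℤ) by ring,
        zpow_add₀ h2ne, zpow_natCast, mul_assoc]
    · rw [r2, show -((A.card : ℤ) + 1 - (d + m₂) - 1) = ((d : ℤ) - A.card) + (m₂ : ℤ) by ring,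
        zpow_add₀ h2ne, zpow_natCast, mul_assoc]
    · rw [r3, show -((A.card : ℤ) + 1 - (d + m₃) - 1) = ((d : ℤ) - A.card) + (m₃ : ℤ) by ring,
        zpow_add₀ h2ne, zpow_natCast, mul_assoc]
    · rw [r4, show -((A.card : ℤ) + 3 - (d + s + 1) - 2) = ((d : ℤ) - A.card) + (s : ℤ) by ring,
        zpow_add₀ h2ne, zpow_natCast, mul_assoc]
    · intro hA0
      refine ⟨?_, hs0 hA0⟩
      rw [hA0, Finset.prod_empty, one_mul]
      exact zpow_pos (by norm_num) _
  have hz0pos : 0 < z₀ := by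
    rw [hz₀]
    refine Finset.sum_pos' (fun A hA => ?_) ⟨∅, Finset.empty_mem_powerset E, ?_⟩
    · obtain ⟨b, s, m₁, m₂, m₃, hb, _, _, _, _, _, _, _, _, _, _, e0, _, _, _, _, _⟩ := main A hA
      rw [e0]; exact hb
    · obtain ⟨b, s, m₁, m₂, m₃, hb, _, _, _, _, _, _, _, _, _, _, e0, _, _, _, _, h0⟩ :=
        main ∅ (Finset.empty_mem_powerset E)
      rw [e0]; exact (h0 rfl).1
  refine ⟨hz0pos, ⟨?_, ?_⟩, ⟨?_, ?_⟩, ⟨?_, ?_⟩, ⟨?_, ?_⟩, ⟨?_, ?_⟩, ⟨?_, ?_⟩, ?_⟩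
  · -- z₀ ≤ z₁
    rw [hz₀, hz₁]
    refine Finset.sum_le_sum fun A hA => ?_
    obtain ⟨b, s, m₁, m₂, m₃, hb, _, _, _, _, _, _, _, _, _, _, e0, e1, _, _, _, _⟩ := main A hA
    rw [e0, e1]
    nlinarith [one_le_pow₀ (one_le_two (α := ℝ)) (n := m₁)]
  · -- z₁ ≤ 2 z₀
    rw [hz₀, hz₁, Finset.mul_sum]
    refine Finset.sum_le_sum fun A hA => ?_
    obtain ⟨b, s, m₁, m₂, m₃, hb, a1, _, _, _, _, _, _, _, _, _, e0, e1, _, _, _, _⟩ := main A hA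
    rw [e0, e1]
    have := pow_le_pow_right₀ (one_le_two (α := ℝ)) a1
    nlinarith [this]
  · -- z₀ ≤ z₂
    rw [hz₀, hz₂]
    refine Finset.sum_le_sum fun A hA => ?_
    obtain ⟨b, s, m₁, m₂, m₃, hb, _, _, _, _, _, _, _, _, _, _, e0, _, e2, _, _, _⟩ := main A hA
    rw [e0, e2]
    nlinarith [one_le_pow₀ (one_le_two (α := ℝ)) (n := m₂)]
  · rw [hz₀, hz₂, Finset.mul_sum]
    refine Finset.sum_le_sum fun A hA => ?_
    obtain ⟨b, s, m₁, m₂, m₃, hb, _, a2, _, _, _, _, _, _, _, _, e0, _, e2, _, _, _⟩ := main A hA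
    rw [e0, e2]
    have := pow_le_pow_right₀ (one_le_two (α := ℝ)) a2
    nlinarith [this]
  · rw [hz₀, hz₃]
    refine Finset.sum_le_sum fun A hA => ?_
    obtain ⟨b, s, m₁, m₂, m₃, hb, _, _, _, _, _, _, _, _, _, _, e0, _, _, e3', _, _⟩ := main A hA
    rw [e0, e3']
    nlinarith [one_le_pow₀ (one_le_two (α := ℝ)) (n := m₃)]
  · rw [hz₀, hz₃, Finset.mul_sum]
    refine Finset.sum_le_sum fun A hA => ?_
    obtain ⟨b, s, m₁, m₂, m₃, hb, _, _, a3, _, _, _, _, _, _, _, e0, _, _, e3', _, _⟩ := main A hA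
    rw [e0, e3']
    have := pow_le_pow_right₀ (one_le_two (α := ℝ)) a3
    nlinarith [this]
  · -- z₄/2 < z₁
    rw [hz₄, hz₁, Finset.sum_div]
    refine Finset.sum_lt_sum (fun A hA => ?_) ⟨∅, Finset.empty_mem_powerset E, ?_⟩
    · obtain ⟨b, s, m₁, m₂, m₃, hb, _, _, _, _, _, _, c1, _, _, _, _, e1, _, _, e4, _⟩ := main A hA
      rw [e1, e4]
      have h := pow_le_pow_right₀ (one_le_two (α := ℝ)) c1
      rw [pow_succ] at h
      nlinarith [h]
    · obtain ⟨b, s, m₁, m₂, m₃, hb, _, _, _, b1, _, _, _, _, _, _, _, e1, _, _, e4, h0⟩ :=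
        main ∅ (Finset.empty_mem_powerset E)
      obtain ⟨hbpos, hs⟩ := h0 rfl
      rw [e1, e4, hs]
      have hm : m₁ = 0 := by omega
      rw [hm]
      norm_num
      linarith
  · -- z₁ ≤ z₄
    rw [hz₁, hz₄]
    refine Finset.sum_le_sum fun A hA => ?_
    obtain ⟨b, s, m₁, m₂, m₃, hb, _, _, _, b1, _, _, _, _, _, _, _, e1, _, _, e4, _⟩ := main A hA
    rw [e1, e4]
    exact mul_le_mul_of_nonneg_left (pow_le_pow_right₀ (one_le_two (α := ℝ)) b1) hb
  · rw [hz₄, hz₂, Finset.sum_div]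
    refine Finset.sum_lt_sum (fun A hA => ?_) ⟨∅, Finset.empty_mem_powerset E, ?_⟩
    · obtain ⟨b, s, m₁, m₂, m₃, hb, _, _, _, _, _, _, _, c2, _, _, _, _, e2, _, e4, _⟩ := main A hA
      rw [e2, e4]
      have h := pow_le_pow_right₀ (one_le_two (α := ℝ)) c2
      rw [pow_succ] at h
      nlinarith [h]
    · obtain ⟨b, s, m₁, m₂, m₃, hb, _, _, _, _, b2, _, _, _, _, _, _, _, e2, _, e4, h0⟩ :=
        main ∅ (Finset.empty_mem_powerset E)
      obtain ⟨hbpos, hs⟩ := h0 rfl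
      rw [e2, e4, hs]
      have hm : m₂ = 0 := by omega
      rw [hm]
      norm_num
      linarith
  · rw [hz₂, hz₄]
    refine Finset.sum_le_sum fun A hA => ?_
    obtain ⟨b, s, m₁, m₂, m₃, hb, _, _, _, _, b2, _, _, _, _, _, _, _, e2, _, e4, _⟩ := main A hA
    rw [e2, e4]
    exact mul_le_mul_of_nonneg_left (pow_le_pow_right₀ (one_le_two (α := ℝ)) b2) hb
  · rw [hz₄, hz₃, Finset.sum_div]
    refine Finset.sum_lt_sum (fun A hA => ?_) ⟨∅, Finset.empty_mem_powerset E, ?_⟩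
    · obtain ⟨b, s, m₁, m₂, m₃, hb, _, _, _, _, _, _, _, _, c3, _, _, _, _, e3', e4, _⟩ := main A hA
      rw [e3', e4]
      have h := pow_le_pow_right₀ (one_le_two (α := ℝ)) c3
      rw [pow_succ] at h
      nlinarith [h]
    · obtain ⟨b, s, m₁, m₂, m₃, hb, _, _, _, _, _, b3, _, _, _, _, _, _, _, e3', e4, h0⟩ :=
        main ∅ (Finset.empty_mem_powerset E)
      obtain ⟨hbpos, hs⟩ := h0 rfl
      rw [e3', e4, hs]
      have hm : m₃ = 0 := by omega
      rw [hm]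
      norm_num
      linarith
  · rw [hz₃, hz₄]
    refine Finset.sum_le_sum fun A hA => ?_
    obtain ⟨b, s, m₁, m₂, m₃, hb, _, _, _, _, _, b3, _, _, _, _, _, _, _, e3', e4, _⟩ := main A hA
    rw [e3', e4]
    exact mul_le_mul_of_nonneg_left (pow_le_pow_right₀ (one_le_two (α := ℝ)) b3) hb
  · -- z₁ + z₂ + z₃ = 2 z₀ + z₄
    rw [hz₁, hz₂, hz₃, hz₀, hz₄, Finset.mul_sum, ← Finset.sum_add_distrib,
      ← Finset.sum_add_distrib, ← Finset.sum_add_distrib]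
    refine Finset.sum_congr rfl fun A hA => ?_
    obtain ⟨b, s, m₁, m₂, m₃, hb, _, _, _, _, _, _, _, _, _, hidR, e0, e1, e2, e3', e4, _⟩ :=
      main A hA
    rw [e0, e1, e2, e3', e4]
    linear_combination b * hidR
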